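/- Let B and C be n×n positive semidefinite complex matrices, and let h : [0,∞) → ℝ be a monotonically increasing concave function satisfying h(y) − h(x) ≤ y − x for all 0 ≤ x ≤ y (i.e., h increases with slope at most 1). Then for every index k, λ_k↓(h(C + B) − B) ≤ h(λ_k↓(C)). -/

import Mathlib

open Matrix
open scoped ComplexOrder

/-- The eigenvalues of a square matrix, sorted in non-increasing order
(junk value `0` if the matrix is not Hermitian). -/
noncomputable def eigValsDown {𝕜 : Type*} [RCLike 𝕜] {n : ℕ}
    (A : Matrix (Fin n) (Fin n) 𝕜) : Fin n → ℝ :=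
  if hA : A.IsHermitian then
    fun k => (hA.eigenvalues ∘ Tuple.sort hA.eigenvalues) k.rev
  else 0

/-- Functional calculus: apply a real function to a Hermitian matrix via its spectral
decomposition (junk value `0` if the matrix is not Hermitian). -/
noncomputable def matFun {𝕜 : Type*} [RCLike 𝕜] {n : ℕ} (h : ℝ → ℝ)
    (A : Matrix (Fin n) (Fin n) 𝕜) : Matrix (Fin n) (Fin n) 𝕜 :=
  if hA : A.IsHermitian then
    (hA.eigenvectorUnitary : Matrix (Fin n) (Fin n) 𝕜) *
      Matrix.diagonal (fun i => (h (hA.eigenvalues i) : 𝕜)) *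
      star (hA.eigenvectorUnitary : Matrix (Fin n) (Fin n) 𝕜)
  else 0

/-- The operator norm (largest singular value) of a matrix. -/
noncomputable def opNorm {𝕜 : Type*} [RCLike 𝕜] {n : ℕ}
    (A : Matrix (Fin n) (Fin n) 𝕜) : ℝ :=
  ‖Matrix.toEuclideanCLM (𝕜 := 𝕜) A‖

/-- The matrix absolute value `|M| = (Mᴴ M)^(1/2)`. -/
noncomputable def matAbs {𝕜 : Type*} [RCLike 𝕜] {n : ℕ}
    (A : Matrix (Fin n) (Fin n) 𝕜) : Matrix (Fin n) (Fin n) 𝕜 :=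
  (Matrix.PosSemidef.isHermitian (Matrix.posSemidef_conjTranspose_mul_self A)).eigenvectorUnitary.1 *
    Matrix.diagonal ((↑) ∘ Real.sqrt ∘
      (Matrix.PosSemidef.isHermitian (Matrix.posSemidef_conjTranspose_mul_self A)).eigenvalues) *
    (star (Matrix.PosSemidef.isHermitian
      (Matrix.posSemidef_conjTranspose_mul_self A)).eigenvectorUnitary : Matrix (Fin n) (Fin n) 𝕜)

/-- The Ky Fan `k`-norm: the sum of the `k` largest singular values. -/
noncomputable def kyFanNorm {𝕜 : Type*} [RCLike 𝕜] {n : ℕ} (k : ℕ)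
    (A : Matrix (Fin n) (Fin n) 𝕜) : ℝ :=
  ∑ j ∈ Finset.univ.filter (fun j : Fin n => (j : ℕ) < k), eigValsDown (matAbs A) j

namespace Stmt2Aux

open scoped InnerProductSpace

variable {n : ℕ}

/-- quadratic form -/
noncomputable def qf (A : Matrix (Fin n) (Fin n) ℂ) (x : EuclideanSpace ℂ (Fin n)) : ℝ :=
  RCLike.re (⟪x, Matrix.toEuclideanLin A x⟫_ℂ)

lemma qf_nonneg {A : Matrix (Fin n) (Fin n) ℂ} (hA : A.PosSemidef)
    (x : EuclideanSpace ℂ (Fin n)) : 0 ≤ qf A x := by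
  rw [qf, toEuclideanLin_apply, EuclideanSpace.inner_eq_star_dotProduct, WithLp.ofLp_toLp, dotProduct_comm]
  exact hA.re_dotProduct_nonneg _

lemma qf_sub (X Y : Matrix (Fin n) (Fin n) ℂ) (x : EuclideanSpace ℂ (Fin n)) :
    qf (X - Y) x = qf X x - qf Y x := by
  rw [qf, qf, qf, map_sub, LinearMap.sub_apply, inner_sub_right, map_sub]

lemma qf_add (X Y : Matrix (Fin n) (Fin n) ℂ) (x : EuclideanSpace ℂ (Fin n)) :
    qf (X + Y) x = qf X x + qf Y x := by
  rw [qf, qf, qf, map_add, LinearMap.add_apply, inner_add_right, map_add]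

lemma qf_expand (A : Matrix (Fin n) (Fin n) ℂ) {g : Fin n → EuclideanSpace ℂ (Fin n)}
    (hg : Orthonormal ℂ g) {μ : Fin n → ℝ} (s : Finset (Fin n))
    (hAg : ∀ j ∈ s, Matrix.toEuclideanLin A (g j) = ((μ j : ℂ)) • g j) (c : Fin n → ℂ) :
    qf A (∑ j ∈ s, c j • g j) = ∑ j ∈ s, μ j * ‖c j‖^2 := by
  have h1 : Matrix.toEuclideanLin A (∑ j ∈ s, c j • g j)
      = ∑ j ∈ s, ((μ j : ℂ) * c j) • g j := by
    rw [map_sum]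
    refine Finset.sum_congr rfl fun j hj => ?_
    rw [_root_.map_smul, hAg j hj, smul_smul, mul_comm]
  rw [qf, h1, hg.inner_sum, map_sum]
  refine Finset.sum_congr rfl fun j hj => ?_
  rw [mul_left_comm, RCLike.conj_mul]
  simp [← Complex.ofReal_pow]

lemma sum_norm_sq_eq_one {g : Fin n → EuclideanSpace ℂ (Fin n)} (hg : Orthonormal ℂ g)
    (s : Finset (Fin n)) (c : Fin n → ℂ)
    (hx : ‖(∑ j ∈ s, c j • g j : EuclideanSpace ℂ (Fin n))‖ = 1) :
    ∑ j ∈ s, ‖c j‖^2 = 1 := by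
  have h1 := hg.inner_sum c c s
  rw [inner_self_eq_norm_sq_to_K, hx] at h1
  have h2 : ((∑ j ∈ s, ‖c j‖^2 : ℝ) : ℂ) = 1 := by
    push_cast
    rw [show ∑ j ∈ s, ((‖c j‖:ℂ))^2 = ∑ j ∈ s, (starRingEnd ℂ) (c j) * c j from
      Finset.sum_congr rfl fun j _ => (RCLike.conj_mul (c j)).symm, ← h1]
    norm_num
  exact_mod_cast h2

lemma toEuclideanLin_eigen {A : Matrix (Fin n) (Fin n) ℂ} (hA : A.IsHermitian) (j : Fin n) :
    Matrix.toEuclideanLin A (hA.eigenvectorBasis j)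
      = ((hA.eigenvalues j : ℂ)) • hA.eigenvectorBasis j := by
  rw [toEuclideanLin_apply]
  apply PiLp.ext
  intro i
  have h0 := congrFun (hA.mulVec_eigenvectorBasis j) i
  simpa [WithLp.equiv, Complex.real_smul] using h0

lemma matFun_isHermitian {A : Matrix (Fin n) (Fin n) ℂ} (hA : A.IsHermitian) (h : ℝ → ℝ) :
    (matFun h A).IsHermitian := by
  rw [matFun, dif_pos hA, Matrix.star_eq_conjTranspose]
  refine isHermitian_mul_mul_conjTranspose _ ?_
  rw [isHermitian_diagonal_iff]
  intro i
  exact Complex.conj_ofReal _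

lemma matFun_toEuclideanLin_eigen {A : Matrix (Fin n) (Fin n) ℂ} (hA : A.IsHermitian)
    (h : ℝ → ℝ) (j : Fin n) :
    Matrix.toEuclideanLin (matFun h A) (hA.eigenvectorBasis j)
      = ((h (hA.eigenvalues j) : ℂ)) • hA.eigenvectorBasis j := by
  rw [toEuclideanLin_apply, matFun, dif_pos hA]
  rw [← mulVec_mulVec, ← mulVec_mulVec]
  rw [show (hA.eigenvectorBasis j).ofLp = ⇑(hA.eigenvectorBasis j) from rfl]
  rw [hA.star_eigenvectorUnitary_mulVec j, diagonal_mulVec_single, mul_one]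
  rw [show (Pi.single j (RCLike.ofReal (h (hA.eigenvalues j)) : ℂ) : Fin n → ℂ)
      = ((h (hA.eigenvalues j) : ℂ) • (Pi.single j (1:ℂ) : Fin n → ℂ)) by
    rw [← Pi.single_smul, smul_eq_mul, mul_one]; norm_cast]
  rw [mulVec_smul, hA.eigenvectorUnitary_mulVec]
  rfl

end Stmt2Aux

open Stmt2Aux Module Submodule
open scoped InnerProductSpace

/-- for PSD `B, C` and a monotonically increasing concave `h` on `[0,∞)`
with slope at most `1`, one has `λ_k↓(h(C + B) - B) ≤ h(λ_k↓(C))` for every `k`. -/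
theorem stmt2 {n : ℕ} (B C : Matrix (Fin n) (Fin n) ℂ)
    (hB : B.PosSemidef) (hC : C.PosSemidef)
    (h : ℝ → ℝ) (h_mono : MonotoneOn h (Set.Ici (0 : ℝ)))
    (h_conc : ConcaveOn ℝ (Set.Ici (0 : ℝ)) h)
    (h_slope : ∀ x y : ℝ, 0 ≤ x → x ≤ y → h y - h x ≤ y - x)
    (k : Fin n) :
    eigValsDown (matFun h (C + B) - B) k ≤ h (eigValsDown C k) := by
  classical
  have hA : (C + B).PosSemidef := hC.add hB
  have hAH : (C + B).IsHermitian := hA.isHermitian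
  have hMF : (matFun h (C + B)).IsHermitian := matFun_isHermitian hAH h
  have hM : (matFun h (C + B) - B).IsHermitian := hMF.sub hB.isHermitian
  rw [eigValsDown, eigValsDown, dif_pos hM, dif_pos hC.isHermitian]
  set σ := Tuple.sort hM.eigenvalues with hσdef
  set τ := Tuple.sort hC.isHermitian.eigenvalues with hτdef
  simp only [Function.comp_apply]
  set m := hM.eigenvalues (σ k.rev) with hmdef
  set lC := hC.isHermitian.eigenvalues (τ k.rev) with hlCdef
  have hlC0 : 0 ≤ lC := hC.eigenvalues_nonneg (τ k.rev)
  -- families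
  set v := hM.eigenvectorBasis with hvdef
  set w := hC.isHermitian.eigenvectorBasis with hwdef
  set a := hAH.eigenvectorBasis with hadef
  set gM : Fin n → EuclideanSpace ℂ (Fin n) := fun j => v (σ j) with hgMdef
  set gC : Fin n → EuclideanSpace ℂ (Fin n) := fun j => w (τ j) with hgCdef
  have honM : Orthonormal ℂ gM := v.orthonormal.comp σ σ.injective
  have honC : Orthonormal ℂ gC := w.orthonormal.comp τ τ.injective
  set P : Finset (Fin n) := Finset.Ici k.rev with hPdef
  set Q : Finset (Fin n) := Finset.Iic k.rev with hQdef
  set V : Submodule ℂ (EuclideanSpace ℂ (Fin n)) := Submodule.span ℂ (gM '' ↑P) with hVdef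
  set W : Submodule ℂ (EuclideanSpace ℂ (Fin n)) := Submodule.span ℂ (gC '' ↑Q) with hWdef
  have hVr : finrank ℂ V = P.card := by
    rw [hVdef, Set.image_eq_range]
    have := finrank_span_eq_card
      (honM.linearIndependent.comp ((↑) : (↑P : Set (Fin n)) → Fin n) Subtype.val_injective)
    simpa [Function.comp_def] using this
  have hWr : finrank ℂ W = Q.card := by
    rw [hWdef, Set.image_eq_range]
    have := finrank_span_eq_card
      (honC.linearIndependent.comp ((↑) : (↑Q : Set (Fin n)) → Fin n) Subtype.val_injective)
    simpa [Function.comp_def] using this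
  -- intersection is nontrivial
  have hsum := Submodule.finrank_sup_add_finrank_inf_eq V W
  have hle : finrank ℂ ↥(V ⊔ W) ≤ n :=
    le_trans (Submodule.finrank_le _) (le_of_eq finrank_euclideanSpace_fin)
  have hPc : P.card = n - k.rev := Fin.card_Ici k.rev
  have hQc : Q.card = k.rev + 1 := Fin.card_Iic k.rev
  have hkrev : (k.rev : ℕ) = n - 1 - k := by simp [Fin.rev]; omega
  have hkn : (k : ℕ) < n := k.isLt
  have hinf : finrank ℂ ↥(V ⊓ W) ≠ 0 := by omega
  have hbot : V ⊓ W ≠ ⊥ := by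
    intro hb
    rw [hb, finrank_bot] at hinf
    exact hinf rfl
  obtain ⟨x, hxmem, hx0⟩ := Submodule.exists_mem_ne_zero_of_ne_bot hbot
  set u : EuclideanSpace ℂ (Fin n) := ((‖x‖ : ℂ))⁻¹ • x with hudef
  have hu1 : ‖u‖ = 1 := norm_smul_inv_norm hx0
  have huV : u ∈ V := V.smul_mem _ (Submodule.mem_inf.mp hxmem).1
  have huW : u ∈ W := W.smul_mem _ (Submodule.mem_inf.mp hxmem).2
  -- coefficients in V
  have hinjM : Function.Injective gM := honM.linearIndependent.injective
  have hinjC : Function.Injective gC := honC.linearIndependent.injective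
  have huV' : u ∈ Submodule.span ℂ (↑(P.image gM) : Set (EuclideanSpace ℂ (Fin n))) := by
    rwa [Finset.coe_image]
  obtain ⟨f, hf⟩ := mem_span_finset.mp huV'
  rw [Finset.sum_image (fun j _ j' _ hjj' => hinjM hjj')] at hf
  set c : Fin n → ℂ := fun j => f (gM j) with hcdef
  have huW' : u ∈ Submodule.span ℂ (↑(Q.image gC) : Set (EuclideanSpace ℂ (Fin n))) := by
    rwa [Finset.coe_image]
  obtain ⟨f', hf'⟩ := mem_span_finset.mp huW'
  rw [Finset.sum_image (fun j _ j' _ hjj' => hinjC hjj')] at hf'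
  set d : Fin n → ℂ := fun j => f' (gC j) with hddef
  -- lower bound for qf M u
  have e1 : qf (matFun h (C + B) - B) u = ∑ j ∈ P, hM.eigenvalues (σ j) * ‖c j‖^2 := by
    conv_lhs => rw [← hf.2]
    exact qf_expand _ honM P (fun j _ => toEuclideanLin_eigen hM (σ j)) c
  have e2 : ∑ j ∈ P, ‖c j‖^2 = 1 := sum_norm_sq_eq_one honM P c (by rw [hf.2]; exact hu1)
  have e3 : m ≤ qf (matFun h (C + B) - B) u := by
    rw [e1]
    calc m = ∑ j ∈ P, m * ‖c j‖^2 := by rw [← Finset.mul_sum, e2, mul_one]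
    _ ≤ ∑ j ∈ P, hM.eigenvalues (σ j) * ‖c j‖^2 := by
        refine Finset.sum_le_sum fun j hj => ?_
        have := Tuple.monotone_sort hM.eigenvalues (Finset.mem_Ici.mp hj)
        exact mul_le_mul_of_nonneg_right this (by positivity)
  -- upper bound for qf C u
  have e4 : qf C u = ∑ j ∈ Q, hC.isHermitian.eigenvalues (τ j) * ‖d j‖^2 := by
    conv_lhs => rw [← hf'.2]
    exact qf_expand _ honC Q (fun j _ => toEuclideanLin_eigen hC.isHermitian (τ j)) d
  have e5 : ∑ j ∈ Q, ‖d j‖^2 = 1 := sum_norm_sq_eq_one honC Q d (by rw [hf'.2]; exact hu1)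
  have e6 : qf C u ≤ lC := by
    rw [e4]
    calc ∑ j ∈ Q, hC.isHermitian.eigenvalues (τ j) * ‖d j‖^2
        ≤ ∑ j ∈ Q, lC * ‖d j‖^2 := by
          refine Finset.sum_le_sum fun j hj => ?_
          have := Tuple.monotone_sort hC.isHermitian.eigenvalues (Finset.mem_Iic.mp hj)
          exact mul_le_mul_of_nonneg_right this (by positivity)
    _ = lC := by rw [← Finset.mul_sum, e5, mul_one]
  have e7 : 0 ≤ qf C u := qf_nonneg hC u
  have e8 : 0 ≤ qf B u := qf_nonneg hB u
  -- Jensen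
  set ec : Fin n → ℂ := fun j => ⟪a j, u⟫_ℂ with hecdef
  have hrepr : ∑ j, ec j • a j = u := a.sum_repr' u
  have e9 : qf (matFun h (C + B)) u = ∑ j, h (hAH.eigenvalues j) * ‖ec j‖^2 := by
    conv_lhs => rw [← hrepr]
    exact qf_expand _ a.orthonormal Finset.univ
      (fun j _ => matFun_toEuclideanLin_eigen hAH h j) ec
  have e10 : qf (C + B) u = ∑ j, hAH.eigenvalues j * ‖ec j‖^2 := by
    conv_lhs => rw [← hrepr]
    exact qf_expand _ a.orthonormal Finset.univ
      (fun j _ => toEuclideanLin_eigen hAH j) ec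
  have e11 : ∑ j, ‖ec j‖^2 = 1 :=
    sum_norm_sq_eq_one a.orthonormal Finset.univ ec (by rw [hrepr]; exact hu1)
  have jensen : qf (matFun h (C + B)) u ≤ h (qf (C + B) u) := by
    rw [e9, e10]
    have := h_conc.le_map_sum (t := Finset.univ) (w := fun j => ‖ec j‖^2)
      (p := fun j => hAH.eigenvalues j) (fun j _ => by positivity) e11
      (fun j _ => Set.mem_Ici.mpr (hA.eigenvalues_nonneg j))
    simpa only [smul_eq_mul, mul_comm] using this
  -- splits
  have s1 : qf (matFun h (C + B) - B) u = qf (matFun h (C + B)) u - qf B u := qf_sub _ _ _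
  have s2 : qf (C + B) u = qf C u + qf B u := qf_add _ _ _
  -- final chain
  have slope := h_slope (qf C u) (qf C u + qf B u) e7 (by linarith)
  have mono := h_mono (Set.mem_Ici.mpr e7) (Set.mem_Ici.mpr hlC0) e6
  have : m ≤ h lC := by
    have h1 : m ≤ h (qf C u + qf B u) - qf B u := by
      rw [s1] at e3
      rw [← s2]
      linarith
    linarith
  exact this
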